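/- Suppose the joint distribution p of (X_1,...,X_n,Y) is tail-to-tail, i.e. X_1,...,X_n are conditionally independent given Y. Then RSI(X;Y) = TC(X) ≥ 0. -/

import Mathlib

open Classical Finset Real

namespace HOI

/-- Distribution (pmf) of a random variable `X` on a finite sample space with mass `p`. -/
noncomputable def pdist {Ω α : Type} [Fintype Ω] (p : Ω → ℝ) (X : Ω → α) (a : α) : ℝ :=
  ∑ ω, if X ω = a then p ω else 0

/-- Shannon entropy of a finitely-supported discrete random variable. -/
noncomputable def ent {Ω α : Type} [Fintype Ω] [Fintype α] (p : Ω → ℝ) (X : Ω → α) : ℝ :=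
  ∑ a, Real.negMulLog (pdist p X a)

/-- Conditional entropy H(X|Y) = H(X,Y) - H(Y). -/
noncomputable def cent {Ω α β : Type} [Fintype Ω] [Fintype α] [Fintype β]
    (p : Ω → ℝ) (X : Ω → α) (Y : Ω → β) : ℝ :=
  ent p (fun ω => (X ω, Y ω)) - ent p Y

/-- Mutual information I(X;Y). -/
noncomputable def mi {Ω α β : Type} [Fintype Ω] [Fintype α] [Fintype β]
    (p : Ω → ℝ) (X : Ω → α) (Y : Ω → β) : ℝ :=
  ent p X + ent p Y - ent p (fun ω => (X ω, Y ω))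

/-- Conditional mutual information I(X;Y|Z). -/
noncomputable def cmi {Ω α β γ : Type} [Fintype Ω] [Fintype α] [Fintype β] [Fintype γ]
    (p : Ω → ℝ) (X : Ω → α) (Y : Ω → β) (Z : Ω → γ) : ℝ :=
  cent p X Z + cent p Y Z - cent p (fun ω => (X ω, Y ω)) Z

/-- Interaction information II(X;Y;Z) = I(X;Y) - I(X;Y|Z). -/
noncomputable def ii {Ω α β γ : Type} [Fintype Ω] [Fintype α] [Fintype β] [Fintype γ]
    (p : Ω → ℝ) (X : Ω → α) (Y : Ω → β) (Z : Ω → γ) : ℝ :=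
  mi p X Y - cmi p X Y Z

/-- Sub-vector of components of `X` with indices in `s`. -/
def subvec {Ω : Type} {n : ℕ} {α : Fin n → Type} (X : ∀ i, Ω → α i) (s : Finset (Fin n)) :
    Ω → ((i : {j // j ∈ s}) → α i.1) :=
  fun ω i => X i.1 ω

/-- The full random vector. -/
def fullvec {Ω : Type} {n : ℕ} {α : Fin n → Type} (X : ∀ i, Ω → α i) : Ω → (∀ i, α i) :=
  fun ω i => X i ω

/-- Joint entropy of the components of `X` with indices in `s`. -/
noncomputable def vecH {Ω : Type} [Fintype Ω] {n : ℕ} {α : Fin n → Type} [∀ i, Fintype (α i)]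
    (p : Ω → ℝ) (X : ∀ i, Ω → α i) (s : Finset (Fin n)) : ℝ :=
  ent p (subvec X s)

/-- Total correlation. -/
noncomputable def TC {Ω : Type} [Fintype Ω] {n : ℕ} {α : Fin n → Type} [∀ i, Fintype (α i)]
    (p : Ω → ℝ) (X : ∀ i, Ω → α i) : ℝ :=
  (∑ j, ent p (X j)) - ent p (fullvec X)

/-- Dual total correlation. -/
noncomputable def DTC {Ω : Type} [Fintype Ω] {n : ℕ} {α : Fin n → Type} [∀ i, Fintype (α i)]
    (p : Ω → ℝ) (X : ∀ i, Ω → α i) : ℝ :=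
  ent p (fullvec X) - ∑ j, (ent p (fullvec X) - vecH p X (Finset.univ \ {j}))

/-- O-information. -/
noncomputable def Oinfo {Ω : Type} [Fintype Ω] {n : ℕ} {α : Fin n → Type} [∀ i, Fintype (α i)]
    (p : Ω → ℝ) (X : ∀ i, Ω → α i) : ℝ :=
  ((n : ℝ) - 2) * ent p (fullvec X) + ∑ j, (ent p (X j) - vecH p X (Finset.univ \ {j}))

/-- Redundancy-synergy index. -/
noncomputable def RSI {Ω β : Type} [Fintype Ω] [Fintype β] {n : ℕ} {α : Fin n → Type}
    [∀ i, Fintype (α i)] (p : Ω → ℝ) (X : ∀ i, Ω → α i) (Y : Ω → β) : ℝ :=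
  (∑ j, mi p (X j) Y) - mi p (fullvec X) Y

end HOI

open HOI

section Aux

open Real

variable {A κ : Type} [Fintype A]

/-- Marginal of a mass function `Q` under a map `g`. -/
noncomputable def margd (Q : A → ℝ) (g : A → κ) (z : κ) : ℝ :=
  ∑ w, if g w = z then Q w else 0

lemma aux_sum_marg [Fintype κ] (Q : A → ℝ) (g : A → κ) (F : κ → ℝ) :
    ∑ z : κ, margd Q g z * F z = ∑ w, Q w * F (g w) := by
  unfold margd
  simp_rw [Finset.sum_mul, ite_mul, zero_mul]
  rw [Finset.sum_comm]
  refine Finset.sum_congr rfl fun w _ => ?_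
  simp

lemma aux_ent_marg [Fintype κ] (Q : A → ℝ) (g : A → κ) :
    ∑ z : κ, Real.negMulLog (margd Q g z) = ∑ w, Q w * (-(Real.log (margd Q g (g w)))) := by
  have h := aux_sum_marg Q g (fun z => -(Real.log (margd Q g z)))
  rw [← h]
  refine Finset.sum_congr rfl fun z _ => ?_
  simp only [Real.negMulLog]
  ring

lemma aux_marg_nonneg {Q : A → ℝ} (hQ : ∀ w, 0 ≤ Q w) (g : A → κ) (z : κ) :
    0 ≤ margd Q g z := by
  refine Finset.sum_nonneg fun w _ => ?_
  split <;> simp [hQ]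

lemma aux_marg_ge {Q : A → ℝ} (hQ : ∀ w, 0 ≤ Q w) (g : A → κ) (w : A) :
    Q w ≤ margd Q g (g w) := by
  unfold margd
  have h : Q w = if g w = g w then Q w else 0 := by simp
  rw [h]
  refine Finset.single_le_sum (f := fun w' => if g w' = g w then Q w' else 0)
    (fun i _ => ?_) (Finset.mem_univ w)
  split <;> simp [hQ]

lemma aux_sum_margd [Fintype κ] (Q : A → ℝ) (g : A → κ) :
    ∑ z : κ, margd Q g z = ∑ w, Q w := by
  have h := aux_sum_marg Q g (fun _ => (1 : ℝ))
  simpa using h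

lemma aux_pdist_comp {Ω : Type} [Fintype Ω] (p : Ω → ℝ) (Z : Ω → A) (f : A → κ) (b : κ) :
    pdist p (fun ω => f (Z ω)) b = margd (pdist p Z) f b := by
  unfold pdist margd
  have h : ∀ a : A, (if f a = b then ∑ ω, if Z ω = a then p ω else 0 else 0)
      = ∑ ω, if Z ω = a then (if f a = b then p ω else 0) else 0 := by
    intro a
    by_cases hfa : f a = b <;> simp [hfa]
  simp_rw [h]
  rw [Finset.sum_comm]
  refine Finset.sum_congr rfl fun ω _ => ?_
  rw [Finset.sum_ite_eq Finset.univ (Z ω) (fun a => if f a = b then p ω else 0)]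
  simp

lemma aux_pdist_nonneg {Ω : Type} [Fintype Ω] {p : Ω → ℝ} (hp : ∀ ω, 0 ≤ p ω)
    (Z : Ω → A) (a : A) : 0 ≤ pdist p Z a := by
  unfold pdist
  refine Finset.sum_nonneg fun ω _ => ?_
  split <;> simp [hp]

lemma aux_sum_pdist {Ω : Type} [Fintype Ω] (p : Ω → ℝ) (Z : Ω → A) :
    ∑ a, pdist p Z a = ∑ ω, p ω := by
  unfold pdist
  rw [Finset.sum_comm]
  refine Finset.sum_congr rfl fun ω _ => ?_
  simp

lemma aux_gibbs (a b : A → ℝ) (ha : ∀ x, 0 ≤ a x) (hb : ∀ x, 0 ≤ b x)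
    (hab : ∀ x, a x ≠ 0 → b x ≠ 0) (hsum : ∑ x, b x ≤ ∑ x, a x) :
    ∑ x, a x * Real.log (b x) ≤ ∑ x, a x * Real.log (a x) := by
  have key : ∀ x, a x * Real.log (b x) - a x * Real.log (a x) ≤ b x - a x := by
    intro x
    by_cases h : a x = 0
    · simp [h, hb x]
    · have ha' : 0 < a x := lt_of_le_of_ne (ha x) (Ne.symm h)
      have hb' : 0 < b x := lt_of_le_of_ne (hb x) (Ne.symm (hab x h))
      have hlog : Real.log (b x / a x) ≤ b x / a x - 1 :=
        Real.log_le_sub_one_of_pos (by positivity)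
      rw [Real.log_div (ne_of_gt hb') (ne_of_gt ha')] at hlog
      calc a x * Real.log (b x) - a x * Real.log (a x)
          = a x * (Real.log (b x) - Real.log (a x)) := by ring
        _ ≤ a x * (b x / a x - 1) := mul_le_mul_of_nonneg_left hlog (le_of_lt ha')
        _ = b x - a x := by field_simp
  have h1 := Finset.sum_le_sum (fun x (_ : x ∈ Finset.univ) => key x)
  rw [Finset.sum_sub_distrib, Finset.sum_sub_distrib] at h1
  have h2 : ∑ x, (b x - a x) ≤ 0 := by rw [Finset.sum_sub_distrib]; linarith
  rw [Finset.sum_sub_distrib] at h2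
  linarith

end Aux

/-- for tail-to-tail models, RSI = TC ≥ 0. -/
theorem rsi_tail_to_tail {Ω β : Type} [Fintype Ω] [Fintype β] {n : ℕ}
    {α : Fin n → Type} [∀ i, Fintype (α i)] (hn : 1 ≤ n)
    (p : Ω → ℝ) (hp : ∀ ω, 0 ≤ p ω) (hp1 : ∑ ω, p ω = 1)
    (X : ∀ i, Ω → α i) (Y : Ω → β)
    (htt : ∀ (x : ∀ i, α i) (y : β),
      pdist p (fun ω => (fullvec X ω, Y ω)) (x, y) * (pdist p Y y) ^ (n - 1)
        = ∏ j, pdist p (fun ω => (X j ω, Y ω)) (x j, y)) :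
    RSI p X Y = TC p X ∧ 0 ≤ TC p X := by
  set Q : ((∀ i, α i) × β) → ℝ := pdist p (fun ω => (fullvec X ω, Y ω)) with hQdef
  have hQ0 : ∀ w, 0 ≤ Q w := fun w => aux_pdist_nonneg hp _ w
  have hY : ∀ y : β, pdist p Y y = margd Q Prod.snd y := fun y =>
    aux_pdist_comp p (fun ω => (fullvec X ω, Y ω)) Prod.snd y
  have hXjY : ∀ (j : Fin n) (z : α j × β), pdist p (fun ω => (X j ω, Y ω)) z
      = margd Q (fun w => (w.1 j, w.2)) z := fun j z =>
    aux_pdist_comp p (fun ω => (fullvec X ω, Y ω)) (fun w => (w.1 j, w.2)) z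
  -- pointwise identity
  have hpt : ∀ w : (∀ i, α i) × β,
      Q w * (∑ j, -(Real.log (margd Q (fun w => (w.1 j, w.2)) (w.1 j, w.2))))
        = Real.negMulLog (Q w)
          + ((n : ℝ) - 1) * (Q w * (-(Real.log (margd Q Prod.snd w.2)))) := by
    intro w
    by_cases hw : Q w = 0
    · simp [hw]
    · have hQw : 0 < Q w := lt_of_le_of_ne (hQ0 w) (Ne.symm hw)
      have hS : 0 < margd Q Prod.snd w.2 :=
        lt_of_lt_of_le hQw (aux_marg_ge hQ0 Prod.snd w)
      have hM : ∀ j, 0 < margd Q (fun w => (w.1 j, w.2)) (w.1 j, w.2) := fun j =>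
        lt_of_lt_of_le hQw (aux_marg_ge hQ0 (fun w => (w.1 j, w.2)) w)
      have htt' := htt w.1 w.2
      rw [Prod.mk.eta, hY] at htt'
      simp_rw [hXjY] at htt'
      have hlog := congrArg Real.log htt'
      rw [Real.log_mul (ne_of_gt hQw) (pow_ne_zero _ (ne_of_gt hS)), Real.log_pow,
        Real.log_prod (fun j _ => ne_of_gt (hM j)), Nat.cast_sub hn, Nat.cast_one] at hlog
      rw [Finset.sum_neg_distrib, ← hlog]
      simp only [Real.negMulLog]
      ring
  -- key entropy identity
  have eY : ent p Y = ∑ w, Q w * (-(Real.log (margd Q Prod.snd w.2))) := by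
    unfold ent
    simp_rw [hY]
    exact aux_ent_marg Q Prod.snd
  have eXjY : ∀ j : Fin n, ent p (fun ω => (X j ω, Y ω))
      = ∑ w, Q w * (-(Real.log (margd Q (fun w => (w.1 j, w.2)) (w.1 j, w.2)))) := by
    intro j
    unfold ent
    simp_rw [hXjY j]
    exact aux_ent_marg Q (fun w => (w.1 j, w.2))
  have eXY : ent p (fun ω => (fullvec X ω, Y ω)) = ∑ w, Real.negMulLog (Q w) := by
    unfold ent
    rw [hQdef]
  have key : (∑ j, ent p (fun ω => (X j ω, Y ω)))
      = ent p (fun ω => (fullvec X ω, Y ω)) + ((n : ℝ) - 1) * ent p Y := by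
    calc (∑ j, ent p (fun ω => (X j ω, Y ω)))
        = ∑ j, ∑ w, Q w * (-(Real.log (margd Q (fun w => (w.1 j, w.2)) (w.1 j, w.2)))) :=
          Finset.sum_congr rfl fun j _ => eXjY j
      _ = ∑ w, ∑ j, Q w * (-(Real.log (margd Q (fun w => (w.1 j, w.2)) (w.1 j, w.2)))) :=
          Finset.sum_comm
      _ = ∑ w, Q w * (∑ j, -(Real.log (margd Q (fun w => (w.1 j, w.2)) (w.1 j, w.2)))) := by
          refine Finset.sum_congr rfl fun w _ => ?_
          rw [Finset.mul_sum]
      _ = ∑ w, (Real.negMulLog (Q w)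
            + ((n : ℝ) - 1) * (Q w * (-(Real.log (margd Q Prod.snd w.2))))) :=
          Finset.sum_congr rfl fun w _ => hpt w
      _ = ent p (fun ω => (fullvec X ω, Y ω)) + ((n : ℝ) - 1) * ent p Y := by
          rw [Finset.sum_add_distrib, ← Finset.mul_sum, ← eY, ← eXY]
  have hRSI : RSI p X Y = TC p X := by
    simp only [HOI.RSI, HOI.TC, HOI.mi, Finset.sum_sub_distrib, Finset.sum_add_distrib,
      Finset.sum_const, Finset.card_univ, Fintype.card_fin, nsmul_eq_mul]
    linarith [key]
  -- nonnegativity of TC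
  set m : (∀ i, α i) → ℝ := pdist p (fullvec X) with hmdef
  have hm0 : ∀ x, 0 ≤ m x := fun x => aux_pdist_nonneg hp _ x
  have hm1 : ∑ x, m x = 1 := by rw [hmdef, aux_sum_pdist, hp1]
  have hmj : ∀ (j : Fin n) (a : α j), pdist p (X j) a = margd m (fun x => x j) a :=
    fun j a => aux_pdist_comp p (fullvec X) (fun x => x j) a
  have ej : ∀ j : Fin n, ent p (X j)
      = ∑ x, m x * (-(Real.log (margd m (fun x => x j) (x j)))) := by
    intro j
    unfold ent
    simp_rw [hmj j]
    exact aux_ent_marg m (fun x => x j)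
  have eX : ent p (fullvec X) = ∑ x, Real.negMulLog (m x) := by
    unfold ent
    rw [hmdef]
  have h1 : ∀ j : Fin n, (∑ a : α j, margd m (fun x => x j) a) = 1 := by
    intro j
    rw [aux_sum_margd, hm1]
  have hBsum : ∑ x : (∀ i, α i), ∏ j, margd m (fun x => x j) (x j) = 1 := by
    have h2 := Finset.prod_univ_sum (t := fun j : Fin n => (Finset.univ : Finset (α j)))
      (f := fun j a => margd m (fun x => x j) a)
    rw [Fintype.piFinset_univ] at h2
    rw [← h2]
    exact Finset.prod_eq_one fun j _ => h1 j
  have hB0 : ∀ x : ∀ i, α i, 0 ≤ ∏ j, margd m (fun x => x j) (x j) := fun x =>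
    Finset.prod_nonneg fun j _ => aux_marg_nonneg hm0 _ _
  have hab : ∀ x : ∀ i, α i, m x ≠ 0 → (∏ j, margd m (fun x => x j) (x j)) ≠ 0 := by
    intro x hx
    have hmx : 0 < m x := lt_of_le_of_ne (hm0 x) (Ne.symm hx)
    exact ne_of_gt (Finset.prod_pos fun j _ =>
      lt_of_lt_of_le hmx (aux_marg_ge hm0 (fun x => x j) x))
  have hgibbs := aux_gibbs m (fun x : ∀ i, α i => ∏ j, margd m (fun x => x j) (x j))
    hm0 hB0 hab (by rw [hm1]; exact le_of_eq hBsum)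
  have hsplit : ∀ x : ∀ i, α i, m x * Real.log (∏ j, margd m (fun x => x j) (x j))
      = m x * ∑ j, Real.log (margd m (fun x => x j) (x j)) := by
    intro x
    by_cases hx : m x = 0
    · simp [hx]
    · have hmx : 0 < m x := lt_of_le_of_ne (hm0 x) (Ne.symm hx)
      have hMx : ∀ j : Fin n, margd m (fun x => x j) (x j) ≠ 0 := fun j =>
        ne_of_gt (lt_of_lt_of_le hmx (aux_marg_ge hm0 (fun x => x j) x))
      rw [Real.log_prod (fun j _ => hMx j)]
  have hgibbs' : ∑ x, m x * ∑ j, Real.log (margd m (fun x => x j) (x j))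
      ≤ ∑ x, m x * Real.log (m x) := by
    calc ∑ x, m x * ∑ j, Real.log (margd m (fun x => x j) (x j))
        = ∑ x, m x * Real.log (∏ j, margd m (fun x => x j) (x j)) :=
          Finset.sum_congr rfl fun x _ => (hsplit x).symm
      _ ≤ ∑ x, m x * Real.log (m x) := hgibbs
  have eSum : ∑ j, ent p (X j)
      = -∑ x, m x * ∑ j, Real.log (margd m (fun x => x j) (x j)) := by
    calc ∑ j, ent p (X j)
        = ∑ j, ∑ x, m x * (-(Real.log (margd m (fun x => x j) (x j)))) :=
          Finset.sum_congr rfl fun j _ => ej j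
      _ = ∑ x, ∑ j, m x * (-(Real.log (margd m (fun x => x j) (x j)))) :=
          Finset.sum_comm
      _ = -∑ x, m x * ∑ j, Real.log (margd m (fun x => x j) (x j)) := by
          rw [← Finset.sum_neg_distrib]
          refine Finset.sum_congr rfl fun x _ => ?_
          rw [Finset.mul_sum, ← Finset.sum_neg_distrib]
          exact Finset.sum_congr rfl fun j _ => by ring
  have eX' : ent p (fullvec X) = -∑ x, m x * Real.log (m x) := by
    rw [eX, ← Finset.sum_neg_distrib]
    refine Finset.sum_congr rfl fun x _ => ?_
    simp only [Real.negMulLog]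
    ring
  refine ⟨hRSI, ?_⟩
  simp only [HOI.TC]
  rw [eSum, eX']
  linarith [hgibbs']
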